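/- Let f ∈ Lip_{δ_D}(α) with seminorm |f|. Then the Haar coefficients satisfy |⟨f, ψ^λ_{j,k}⟩| ≤ |f| · μ(Q_{j,k})^{α + 1/2} for every j ≥ 0, k ∈ K_j, and λ = 1,…, dim V_{j,k} − 1. -/

import Mathlib

open MeasureTheory Set

/-- A dyadic family with inheritance coefficient `B` on a probability space `(X, μ)`:
nested finite partitions `cubes j` of `X` into measurable sets of positive measure,
`cubes 0 = {univ}`, each cube at level `j+1` strictly contained in a unique cube
(its first ancestor) at level `j`, and `μ(ancestor) ≤ B · μ(child)`. -/
structure DyadicFamily {X : Type*} [MeasurableSpace X] (μ : MeasureTheory.Measure X)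
    (B : ℝ) where
  cubes : ℕ → Set (Set X)
  finiteLevel : ∀ j, (cubes j).Finite
  meas : ∀ j, ∀ Q ∈ cubes j, MeasurableSet Q
  zeroth : cubes 0 = {Set.univ}
  cover : ∀ j, ⋃₀ cubes j = Set.univ
  pdisjoint : ∀ j, (cubes j).PairwiseDisjoint id
  posMeasure : ∀ j, ∀ Q ∈ cubes j, 0 < μ Q
  ancestor : ∀ j, ∀ Q ∈ cubes (j + 1), ∃! P, P ∈ cubes j ∧ Q ⊂ P
  inherit : ∀ j, ∀ Q ∈ cubes (j + 1), ∀ P ∈ cubes j, Q ⊂ P →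
    (μ P).toReal ≤ B * (μ Q).toReal
  prob : μ Set.univ = 1

namespace DyadicFamily

variable {X : Type*} [MeasurableSpace X] {μ : MeasureTheory.Measure X} {B : ℝ}

/-- Membership in the dyadic family: `Q` is a cube of some level. -/
def Mem (D : DyadicFamily μ B) (Q : Set X) : Prop := ∃ j, Q ∈ D.cubes j

/-- The offspring of a cube `Q` of level `j`: the cubes of level `j+1`
strictly contained in `Q` (equivalently, whose first ancestor is `Q`). -/
def offspring (D : DyadicFamily μ B) (j : ℕ) (Q : Set X) : Set (Set X) :=
  {Q' ∈ D.cubes (j + 1) | Q' ⊂ Q}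

/-- The pseudo-ultrametric `δ_D(x,y) = inf {μ(Q) : x, y ∈ Q ∈ D}`. -/
noncomputable def delta (D : DyadicFamily μ B) (x y : X) : ℝ :=
  sInf {r : ℝ | ∃ Q, D.Mem Q ∧ x ∈ Q ∧ y ∈ Q ∧ r = (μ Q).toReal}

/-- The distance between two dyadic cubes via the smallest common dyadic ancestor. -/
noncomputable def cubeDist (D : DyadicFamily μ B) (Q₁ Q₂ : Set X) : ℝ :=
  sInf {r : ℝ | ∃ P, D.Mem P ∧ Q₁ ∪ Q₂ ⊆ P ∧ r = (μ P).toReal}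

/-- Mean value of `f` over `Q`. -/
noncomputable def avg (μ : MeasureTheory.Measure X) (f : X → ℝ) (Q : Set X) : ℝ :=
  ((μ Q).toReal)⁻¹ * ∫ x in Q, f x ∂μ

/-- `f` belongs to `V_{j,Q}`: it vanishes outside `Q` and is constant on each
offspring cube of `Q`. -/
def MemV (D : DyadicFamily μ B) (j : ℕ) (Q : Set X) (f : X → ℝ) : Prop :=
  (∀ Q' ∈ D.offspring j Q, ∃ c : ℝ, ∀ x ∈ Q', f x = c) ∧ ∀ x ∉ Q, f x = 0

/-- Every cube of positive level is contained in a cube of level one. -/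
lemma subset_level_one (D : DyadicFamily μ B) :
    ∀ m, ∀ Q ∈ D.cubes (m + 1), ∃ P ∈ D.cubes 1, Q ⊆ P := by
  intro m
  induction m with
  | zero => exact fun Q hQ => ⟨Q, hQ, subset_rfl⟩
  | succ m ih =>
    intro Q hQ
    obtain ⟨P, ⟨hP, hQP⟩, -⟩ := D.ancestor (m + 1) Q hQ
    obtain ⟨P₁, h1, h2⟩ := ih P hP
    exact ⟨P₁, h1, hQP.subset.trans h2⟩

/-- The Lipschitz constant of a `δ`-Lipschitz function is nonnegative. -/
lemma lip_nonneg (D : DyadicFamily μ B) {α : ℝ} {f : X → ℝ} {L : ℝ}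
    (hLip : ∀ x y : X, |f x - f y| ≤ L * D.delta x y ^ α) : 0 ≤ L := by
  have hXne : (Set.univ : Set X).Nonempty := by
    rcases Set.eq_empty_or_nonempty (Set.univ : Set X) with h | h
    · exfalso
      have hh := D.prob
      rw [h] at hh
      simp at hh
    · exact h
  obtain ⟨x, -⟩ := hXne
  have hx : x ∈ ⋃₀ D.cubes 1 := by rw [D.cover 1]; trivial
  obtain ⟨P, hP, hxP⟩ := hx
  have hPne : P ≠ Set.univ := by
    obtain ⟨P₀, ⟨hP₀, hsub⟩, -⟩ := D.ancestor 0 P hP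
    rw [D.zeroth, Set.mem_singleton_iff] at hP₀
    subst hP₀
    intro h
    rw [h] at hsub
    exact hsub.2 subset_rfl
  obtain ⟨y, hy⟩ : ∃ y, y ∉ P := by
    by_contra h
    push_neg at h
    exact hPne (Set.eq_univ_of_forall h)
  have hy' : y ∈ ⋃₀ D.cubes 1 := by rw [D.cover 1]; trivial
  obtain ⟨P₂, hP₂, hyP₂⟩ := hy'
  have hPP₂ : P ≠ P₂ := fun h => hy (h ▸ hyP₂)
  have hset : {r : ℝ | ∃ R, D.Mem R ∧ x ∈ R ∧ y ∈ R ∧ r = (μ R).toReal} = {1} := by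
    ext r
    constructor
    · rintro ⟨R, ⟨m, hm⟩, hxR, hyR, rfl⟩
      cases m with
      | zero =>
        rw [D.zeroth, Set.mem_singleton_iff] at hm
        subst hm
        simp [D.prob]
      | succ m =>
        exfalso
        obtain ⟨P', hP'1, hRP'⟩ := D.subset_level_one m R hm
        have h1 : P' = P := by
          by_contra hne
          exact Set.disjoint_left.mp (D.pdisjoint 1 hP'1 hP hne) (hRP' hxR) hxP
        have h2 : P' = P₂ := by
          by_contra hne
          exact Set.disjoint_left.mp (D.pdisjoint 1 hP'1 hP₂ hne) (hRP' hyR) hyP₂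
        exact hPP₂ (h1 ▸ h2)
    · rintro rfl
      exact ⟨Set.univ, ⟨0, by rw [D.zeroth]; rfl⟩, trivial, trivial, by simp [D.prob]⟩
  have hdelta : D.delta x y = 1 := by
    rw [delta, hset]
    exact csInf_singleton 1
  have hxy := hLip x y
  rw [hdelta, Real.one_rpow, mul_one] at hxy
  exact le_trans (abs_nonneg _) hxy

end DyadicFamily

/-- If `f ∈ Lip_{δ_D}(α)` with seminorm (constant) `L`, then each
Haar coefficient satisfies `|⟨f, ψ⟩| ≤ L · μ(Q)^{α + 1/2}`, where `ψ` is any Haar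
function associated with the cube `Q` (supported on `Q`, constant on its offspring,
unit `L²` norm, vanishing integral). -/
theorem haar_coeff_le_of_lipschitz {X : Type*} [MeasurableSpace X]
    {μ : MeasureTheory.Measure X} {B : ℝ} (hB : 2 ≤ B) (D : DyadicFamily μ B)
    (α : ℝ) (hα : 0 < α) (f : X → ℝ) (hf : MeasureTheory.Integrable f μ) (L : ℝ)
    (hLip : ∀ x y : X, |f x - f y| ≤ L * D.delta x y ^ α)
    (j : ℕ) (Q : Set X) (hQ : Q ∈ D.cubes j) (ψ : X → ℝ)
    (hV : D.MemV j Q ψ)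
    (hzero : ∫ x, ψ x ∂μ = 0)
    (hnorm : ∫ x, ψ x * ψ x ∂μ = 1) :
    |∫ x, f x * ψ x ∂μ| ≤ L * (μ Q).toReal ^ (α + 1/2) := by
  classical
  obtain ⟨hconst, hout⟩ := hV
  have hL : 0 ≤ L := D.lip_nonneg hLip
  -- The offspring of `Q` as a finset.
  set s : Finset (Set X) := (D.finiteLevel (j + 1)).toFinset.filter (fun Q' => Q' ⊂ Q) with hs
  have hmem_s : ∀ Q', Q' ∈ s ↔ Q' ∈ D.offspring j Q := by
    intro Q'
    simp only [hs, Finset.mem_filter, Set.Finite.mem_toFinset, DyadicFamily.offspring,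
      Set.mem_setOf_eq, Set.mem_sep_iff]
  choose! c hc using hconst
  have hmeasc : ∀ Q' ∈ s, MeasurableSet Q' :=
    fun Q' hQ' => D.meas (j + 1) Q' ((hmem_s Q').mp hQ').1
  -- collapse lemma: a function of ψ vanishing at 0 is a finite sum of indicators
  have hcollapse : ∀ (h : ℝ → ℝ), h 0 = 0 →
      ∀ x, h (ψ x) = ∑ Q' ∈ s, Set.indicator Q' (fun _ => h (c Q')) x := by
    intro h h0 x
    by_cases hxQ : x ∈ Q
    · have hx : x ∈ ⋃₀ D.cubes (j + 1) := by rw [D.cover]; trivial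
      obtain ⟨R, hR, hxR⟩ := hx
      obtain ⟨P, ⟨hP, hRP⟩, -⟩ := D.ancestor j R hR
      have hPQ : P = Q := by
        by_contra hne
        exact Set.disjoint_left.mp (D.pdisjoint j hP hQ hne) (hRP.subset hxR) hxQ
      subst hPQ
      have hRoff : R ∈ D.offspring j P := ⟨hR, hRP⟩
      have hRs : R ∈ s := (hmem_s R).mpr hRoff
      rw [Finset.sum_eq_single_of_mem R hRs]
      · rw [Set.indicator_of_mem hxR, hc R hRoff x hxR]
      · intro Q'' hQ'' hne
        apply Set.indicator_of_notMem
        intro hxQ''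
        exact Set.disjoint_left.mp
          (D.pdisjoint (j + 1) ((hmem_s Q'').mp hQ'').1 hR hne) hxQ'' hxR
    · rw [hout x hxQ, h0]
      symm
      apply Finset.sum_eq_zero
      intro Q' hQ'
      apply Set.indicator_of_notMem
      intro hxQ'
      exact hxQ (((hmem_s Q').mp hQ').2.subset hxQ')
  have hrep : ∀ x, ψ x = ∑ Q' ∈ s, Set.indicator Q' (fun _ => c Q') x :=
    fun x => hcollapse id rfl x
  have hmeasψ : Measurable ψ := by
    have : ψ = fun x => ∑ Q' ∈ s, Set.indicator Q' (fun _ => c Q') x := funext hrep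
    rw [this]
    exact Finset.measurable_sum _ fun Q' hQ' => measurable_const.indicator (hmeasc Q' hQ')
  have hboundψ : ∀ x, |ψ x| ≤ ∑ Q' ∈ s, |c Q'| := by
    intro x
    rw [hrep x]
    refine (Finset.abs_sum_le_sum_abs _ _).trans ?_
    apply Finset.sum_le_sum
    intro Q' hQ'
    by_cases h : x ∈ Q' <;>
      simp [Set.indicator_of_mem, Set.indicator_of_notMem, h, abs_nonneg]
  have hfin : IsFiniteMeasure μ := ⟨by rw [D.prob]; exact ENNReal.one_lt_top⟩
  have hψint : Integrable ψ μ := by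
    refine Integrable.mono' (integrable_const (∑ Q' ∈ s, |c Q'|))
      hmeasψ.aestronglyMeasurable (Filter.Eventually.of_forall fun x => ?_)
    simpa using hboundψ x
  have hfψint : Integrable (fun x => f x * ψ x) μ := by
    refine Integrable.mono' ((hf.norm.const_mul (∑ Q' ∈ s, |c Q'|)))
      (hf.aestronglyMeasurable.mul hmeasψ.aestronglyMeasurable)
      (Filter.Eventually.of_forall fun x => ?_)
    simp only [norm_mul, Real.norm_eq_abs]
    rw [mul_comm ((∑ Q' ∈ s, |c Q'|)) _]
    exact mul_le_mul_of_nonneg_left (hboundψ x) (abs_nonneg _)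
  -- base point
  obtain ⟨x₀, hx₀⟩ : Q.Nonempty := by
    rcases Set.eq_empty_or_nonempty Q with h | h
    · exfalso
      have := D.posMeasure j Q hQ
      rw [h] at this
      simp at this
    · exact h
  have hμQfin : μ Q ≠ ⊤ :=
    (lt_of_le_of_lt (measure_mono (Set.subset_univ Q))
      (by rw [D.prob]; exact ENNReal.one_lt_top)).ne
  have hμQpos : 0 < (μ Q).toReal :=
    ENNReal.toReal_pos (D.posMeasure j Q hQ).ne' hμQfin
  have hdelta_nonneg : ∀ x y : X, 0 ≤ D.delta x y := by
    intro x y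
    apply le_csInf
    · exact ⟨1, Set.univ, ⟨0, by rw [D.zeroth]; rfl⟩, trivial, trivial, by simp [D.prob]⟩
    · rintro r ⟨R, -, -, -, rfl⟩
      exact ENNReal.toReal_nonneg
  have hdelta_le : ∀ x ∈ Q, D.delta x x₀ ≤ (μ Q).toReal := by
    intro x hx
    apply csInf_le
    · refine ⟨0, fun r hr => ?_⟩
      obtain ⟨R, -, -, -, rfl⟩ := hr
      exact ENNReal.toReal_nonneg
    · exact ⟨Q, ⟨j, hQ⟩, hx, hx₀, rfl⟩
  have hK : 0 ≤ L * (μ Q).toReal ^ α :=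
    mul_nonneg hL (Real.rpow_nonneg ENNReal.toReal_nonneg α)
  have hptwise : ∀ x, |(f x - f x₀) * ψ x| ≤ L * (μ Q).toReal ^ α * |ψ x| := by
    intro x
    rw [abs_mul]
    by_cases hx : x ∈ Q
    · refine mul_le_mul_of_nonneg_right ?_ (abs_nonneg _)
      calc |f x - f x₀| ≤ L * D.delta x x₀ ^ α := hLip x x₀
        _ ≤ L * (μ Q).toReal ^ α := by
            apply mul_le_mul_of_nonneg_left _ hL
            exact Real.rpow_le_rpow (hdelta_nonneg x x₀) (hdelta_le x hx) hα.le
    · rw [hout x hx]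
      simp
  have hsubint : Integrable (fun x => (f x - f x₀) * ψ x) μ := by
    have heq : (fun x => (f x - f x₀) * ψ x) = fun x => f x * ψ x - f x₀ * ψ x := by
      funext x; ring
    rw [heq]
    exact hfψint.sub (hψint.const_mul (f x₀))
  have h1 : ∫ x, f x * ψ x ∂μ = ∫ x, (f x - f x₀) * ψ x ∂μ := by
    have heq : (fun x => (f x - f x₀) * ψ x) = fun x => f x * ψ x - f x₀ * ψ x := by
      funext x; ring
    rw [heq, integral_sub hfψint (hψint.const_mul (f x₀)), integral_const_mul, hzero,
      mul_zero, sub_zero]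
  -- integral of a sum of indicators
  have hint_sum : ∀ d : Set X → ℝ,
      (∫ x, (∑ Q' ∈ s, Set.indicator Q' (fun _ => d Q') x) ∂μ)
        = ∑ Q' ∈ s, d Q' * (μ Q').toReal := by
    intro d
    rw [integral_finset_sum s (fun Q' hQ' => (integrable_const (d Q')).indicator (hmeasc Q' hQ'))]
    refine Finset.sum_congr rfl fun Q' hQ' => ?_
    rw [integral_indicator_const _ (hmeasc Q' hQ')]
    simp [mul_comm, Measure.real]
  have habs : ∫ x, |ψ x| ∂μ = ∑ Q' ∈ s, |c Q'| * (μ Q').toReal := by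
    calc ∫ x, |ψ x| ∂μ
        = ∫ x, (∑ Q' ∈ s, Set.indicator Q' (fun _ => |c Q'|) x) ∂μ := by
          refine integral_congr_ae (Filter.Eventually.of_forall fun x => ?_)
          exact hcollapse (fun t => |t|) abs_zero x
      _ = ∑ Q' ∈ s, |c Q'| * (μ Q').toReal := hint_sum _
  have hsq : (1 : ℝ) = ∑ Q' ∈ s, (c Q' * c Q') * (μ Q').toReal := by
    rw [← hnorm]
    calc ∫ x, ψ x * ψ x ∂μ
        = ∫ x, (∑ Q' ∈ s, Set.indicator Q' (fun _ => c Q' * c Q') x) ∂μ := by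
          refine integral_congr_ae (Filter.Eventually.of_forall fun x => ?_)
          exact hcollapse (fun t => t * t) (mul_zero 0) x
      _ = ∑ Q' ∈ s, (c Q' * c Q') * (μ Q').toReal := hint_sum _
  have hμsum : ∑ Q' ∈ s, (μ Q').toReal ≤ (μ Q).toReal := by
    have hdisj : (s : Set (Set X)).PairwiseDisjoint id := fun a ha b hb hab =>
      D.pdisjoint (j + 1) ((hmem_s a).mp ha).1 ((hmem_s b).mp hb).1 hab
    have hunion : μ (⋃ Q' ∈ s, (Q' : Set X)) = ∑ Q' ∈ s, μ Q' :=
      measure_biUnion_finset hdisj fun Q' hQ' => hmeasc Q' hQ'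
    have hsub : (⋃ Q' ∈ s, (Q' : Set X)) ⊆ Q :=
      Set.iUnion₂_subset fun Q' hQ' => ((hmem_s Q').mp hQ').2.subset
    have hle : ∑ Q' ∈ s, μ Q' ≤ μ Q := hunion ▸ measure_mono hsub
    have hne : ∀ Q' ∈ s, μ Q' ≠ ⊤ := by
      intro Q' hQ'
      exact ((lt_of_le_of_lt (measure_mono (Set.subset_univ Q'))
        (by rw [D.prob]; exact ENNReal.one_lt_top))).ne
    calc ∑ Q' ∈ s, (μ Q').toReal = (∑ Q' ∈ s, μ Q').toReal := (ENNReal.toReal_sum hne).symm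
      _ ≤ (μ Q).toReal := ENNReal.toReal_mono hμQfin hle
  have hCS : ∫ x, |ψ x| ∂μ ≤ Real.sqrt ((μ Q).toReal) := by
    rw [habs]
    apply Real.le_sqrt_of_sq_le
    have hcs := Finset.sum_sq_le_sum_mul_sum_of_sq_eq_mul s
      (r := fun Q' => |c Q'| * (μ Q').toReal)
      (f := fun Q' => (c Q' * c Q') * (μ Q').toReal)
      (g := fun Q' => (μ Q').toReal)
      (fun Q' _ => mul_nonneg (mul_self_nonneg _) ENNReal.toReal_nonneg)
      (fun Q' _ => ENNReal.toReal_nonneg)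
      (fun Q' _ => by
        have : |c Q'| * |c Q'| = c Q' * c Q' := abs_mul_abs_self _
        ring_nf
        rw [sq_abs]
        ring)
    calc (∑ Q' ∈ s, |c Q'| * (μ Q').toReal) ^ 2
        ≤ (∑ Q' ∈ s, (c Q' * c Q') * (μ Q').toReal) * ∑ Q' ∈ s, (μ Q').toReal := hcs
      _ = 1 * ∑ Q' ∈ s, (μ Q').toReal := by rw [← hsq]
      _ ≤ (μ Q).toReal := by rw [one_mul]; exact hμsum
  calc |∫ x, f x * ψ x ∂μ| = |∫ x, (f x - f x₀) * ψ x ∂μ| := by rw [h1]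
    _ ≤ ∫ x, |(f x - f x₀) * ψ x| ∂μ := by
        have hni := norm_integral_le_integral_norm (μ := μ) (fun x => (f x - f x₀) * ψ x)
        simp only [Real.norm_eq_abs] at hni
        exact hni
    _ ≤ ∫ x, L * (μ Q).toReal ^ α * |ψ x| ∂μ := by
        exact integral_mono hsubint.abs ((hψint.abs.const_mul _)) hptwise
    _ = L * (μ Q).toReal ^ α * ∫ x, |ψ x| ∂μ := integral_const_mul _ _
    _ ≤ L * (μ Q).toReal ^ α * Real.sqrt ((μ Q).toReal) :=
        mul_le_mul_of_nonneg_left hCS hK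
    _ = L * (μ Q).toReal ^ (α + 1/2) := by
        rw [Real.sqrt_eq_rpow, mul_assoc, ← Real.rpow_add hμQpos]
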